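/- Let κ₂ > κ₁ > 0 and α > 0. Set a = α²κ₁² / (4(κ₂−κ₁)² + 4α(κ₂−κ₁)κ₁) and q = 1 + √(1 + 1/a). Then a·q·(a·q + 1)/(2κ₁²(q−1)) = (a + √(a(a+1)))²/(2κ₁²) = α²/(8(κ₂−κ₁)²), and (q−1)/q = (ακ₁ + 2(κ₂−κ₁))/(2ακ₁ + 2(κ₂−κ₁)). -/

import Mathlib

/-- Key algebraic identities in Lemma 3.9: with
`a = α²κ₁²/(4(κ₂−κ₁)² + 4α(κ₂−κ₁)κ₁)` and `q = 1 + √(1 + 1/a)` one has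
`aq(aq+1)/(2κ₁²(q−1)) = (a + √(a(a+1)))²/(2κ₁²) = α²/(8(κ₂−κ₁)²)` and
`(q−1)/q = (ακ₁ + 2(κ₂−κ₁))/(2ακ₁ + 2(κ₂−κ₁))`. -/
theorem moment_exponent_identities
    (κ₁ κ₂ α : ℝ) (hκ₁ : 0 < κ₁) (hκ : κ₁ < κ₂) (hα : 0 < α) :
    let a : ℝ := α ^ 2 * κ₁ ^ 2 / (4 * (κ₂ - κ₁) ^ 2 + 4 * α * (κ₂ - κ₁) * κ₁)
    let q : ℝ := 1 + Real.sqrt (1 + 1 / a)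
    a * q * (a * q + 1) / (2 * κ₁ ^ 2 * (q - 1)) =
        (a + Real.sqrt (a * (a + 1))) ^ 2 / (2 * κ₁ ^ 2) ∧
      (a + Real.sqrt (a * (a + 1))) ^ 2 / (2 * κ₁ ^ 2) = α ^ 2 / (8 * (κ₂ - κ₁) ^ 2) ∧
      (q - 1) / q = (α * κ₁ + 2 * (κ₂ - κ₁)) / (2 * α * κ₁ + 2 * (κ₂ - κ₁)) := by
  intro a q
  have hb0 : (0:ℝ) < κ₂ - κ₁ := sub_pos.2 hκ
  have ha : a = α ^ 2 * κ₁ ^ 2 / (4 * (κ₂ - κ₁) ^ 2 + 4 * α * (κ₂ - κ₁) * κ₁) := rfl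
  have hq : q = 1 + Real.sqrt (1 + 1 / a) := rfl
  have hD : (0:ℝ) < 4 * (κ₂ - κ₁) ^ 2 + 4 * α * (κ₂ - κ₁) * κ₁ := by positivity
  have ha0 : 0 < a := by rw [ha]; positivity
  set s : ℝ := (α * κ₁ + 2 * (κ₂ - κ₁)) / (α * κ₁) with hs
  have hs0 : 0 < s := by rw [hs]; positivity
  have hsq : 1 + 1 / a = s ^ 2 := by
    rw [ha, hs]; field_simp; ring
  have hsqrt : Real.sqrt (1 + 1 / a) = s := by
    rw [hsq, Real.sqrt_sq hs0.le]
  have hq' : q = 1 + s := by rw [hq, hsqrt]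
  have haa : a * (a + 1) = (a * s) ^ 2 := by
    have : a + 1 = a * s ^ 2 := by
      have := hsq
      field_simp at this
      nlinarith [this]
    calc a * (a + 1) = a * (a * s ^ 2) := by rw [this]
      _ = (a * s) ^ 2 := by ring
  have hsqrt2 : Real.sqrt (a * (a + 1)) = a * s := by
    rw [haa, Real.sqrt_sq (by positivity)]
  have haq : a * q = α * κ₁ / (2 * (κ₂ - κ₁)) := by
    rw [hq', hs, ha]; field_simp; ring
  refine ⟨?_, ?_, ?_⟩
  · rw [hsqrt2, hq']
    have key : a + 1 = a * s ^ 2 := by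
      have h := hsq
      field_simp at h
      nlinarith [h]
    have hs' : s ≠ 0 := hs0.ne'
    rw [show (1:ℝ) + s - 1 = s by ring]
    rw [div_eq_div_iff (ne_of_gt (mul_pos (by positivity) hs0)) (by positivity)]
    linear_combination (2 * κ₁ ^ 2 * a * (1 + s)) * key
  · rw [hsqrt2]
    have h1 : a + a * s = α * κ₁ / (2 * (κ₂ - κ₁)) := by
      rw [← haq, hq']; ring
    rw [h1]
    field_simp
    ring
  · rw [hq', hs]
    field_simp
    ring
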